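/- Let 0 < α ≤ β, let T ≥ 1 and s_1, …, s_T be positive integers with s := min{s_1,…,s_T}, and let p ∈ (0,1). Consider random variables X_0 = 1 and X_1, …, X_T generated so that, conditioned on X_t, the ratio of a single fresh sample Z to X_t satisfies P[Z/X_t < 1 − u] ≤ 1 − (α/β)·u for all u ∈ [0, α/β·(β/α)] = [0,1], and X_{t+1} is the maximum of s_{t+1} independent such samples Z. Assume additionally 1 − (β/α)·(T·ln(T/p))/s ≥ 0. Then P[X_T ≥ 1 − (β/α)·(T·ln(T/p))/s] ≥ 1 − p. -/

import Mathlib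

open MeasureTheory ProbabilityTheory

/-- the key round-robin lemma.  `X 0 = 1`, and at each step `X (t+1)` is the
maximum of `s (t+1)` fresh samples whose rescaled value dominates the `(α/β)`-bounded
uniform tail: `P[X_{t+1} < (1-u)·X_t] ≤ (1 − (α/β)u)^{s_{t+1}}` for `u ∈ [0,1]`.
Then `P[X_T ≥ 1 − (β/α)·T·ln(T/p)/s] ≥ 1 − p`. -/
theorem stmt3 {Ω : Type*} [MeasurableSpace Ω] (μ : Measure Ω) [IsProbabilityMeasure μ]
    (α β : ℝ) (hα : 0 < α) (hαβ : α ≤ β)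
    (T : ℕ) (hT : 0 < T) (s : ℕ → ℕ) (hs : ∀ t, 1 ≤ t → t ≤ T → 0 < s t)
    (smin : ℕ) (hsminpos : 0 < smin) (hsmin : ∀ t, 1 ≤ t → t ≤ T → smin ≤ s t)
    (p : ℝ) (hp : p ∈ Set.Ioo (0:ℝ) 1)
    (X : ℕ → Ω → ℝ) (hX0 : ∀ ω, X 0 ω = 1)
    (hstep : ∀ t < T, ∀ u ∈ Set.Icc (0:ℝ) 1,
      μ {ω | X (t + 1) ω < (1 - u) * X t ω} ≤
        ENNReal.ofReal ((1 - (α / β) * u) ^ s (t + 1)))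
    (hnn : 0 ≤ 1 - (β / α) * ((T : ℝ) * Real.log (T / p)) / smin) :
    ENNReal.ofReal (1 - p) ≤
      μ {ω | 1 - (β / α) * ((T : ℝ) * Real.log (T / p)) / smin ≤ X T ω} := by
  obtain ⟨hp0, hp1⟩ := hp
  have hβ : (0:ℝ) < β := lt_of_lt_of_le hα hαβ
  have hα' : α ≠ 0 := hα.ne'
  have hβ' : β ≠ 0 := hβ.ne'
  have hTR : (1:ℝ) ≤ (T:ℝ) := by exact_mod_cast hT
  have hsminR : (0:ℝ) < (smin:ℝ) := by exact_mod_cast hsminpos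
  set L := Real.log ((T:ℝ) / p) with hLdef
  have hTp : (0:ℝ) < (T:ℝ) / p := div_pos (by linarith) hp0
  have hL : 0 ≤ L := Real.log_nonneg (by
    rw [le_div_iff₀ hp0]; linarith)
  set u := (β / α) * L / smin with hudef
  have hu0 : 0 ≤ u := by
    apply div_nonneg _ hsminR.le
    exact mul_nonneg (div_nonneg hβ.le hα.le) hL
  have hTu : (T:ℝ) * u = (β / α) * ((T : ℝ) * L) / smin := by
    rw [hudef]; ring
  have huT : (T:ℝ) * u ≤ 1 := by rw [hTu]; linarith
  have hu1 : u ≤ 1 := by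
    calc u = 1 * u := (one_mul u).symm
    _ ≤ (T:ℝ) * u := by apply mul_le_mul_of_nonneg_right hTR hu0
    _ ≤ 1 := huT
  have hαβu : (α / β) * u = L / smin := by
    have hs' : (smin:ℝ) ≠ 0 := hsminR.ne'
    rw [hudef]; field_simp
  have hbase0 : 0 ≤ 1 - (α / β) * u := by
    have : (α / β) * u ≤ 1 * 1 := by
      apply mul_le_mul _ hu1 hu0 zero_le_one
      exact div_le_one_of_le₀ hαβ hβ.le
    linarith
  have hbase1 : 1 - (α / β) * u ≤ 1 := by
    have : 0 ≤ (α / β) * u := mul_nonneg (div_nonneg hα.le hβ.le) hu0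
    linarith
  -- per-step real bound
  have hstepreal : ∀ t, t < T → (1 - (α / β) * u) ^ s (t + 1) ≤ p / T := by
    intro t ht
    have h1 : (1 - (α / β) * u) ^ s (t + 1) ≤ (1 - (α / β) * u) ^ smin :=
      pow_le_pow_of_le_one hbase0 hbase1 (hsmin (t+1) (Nat.le_add_left 1 t) ht)
    have h2 : 1 - (α / β) * u ≤ Real.exp (-(L / smin)) := by
      rw [hαβu]
      have := Real.add_one_le_exp (-(L / smin))
      linarith
    have h3 : (1 - (α / β) * u) ^ smin ≤ Real.exp (-(L / smin)) ^ smin :=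
      pow_le_pow_left₀ hbase0 h2 smin
    have h4 : Real.exp (-(L / smin)) ^ smin = Real.exp (-L) := by
      rw [← Real.exp_nat_mul]
      congr 1
      have hs' : (smin:ℝ) ≠ 0 := hsminR.ne'
      field_simp
    have h5 : Real.exp (-L) = p / T := by
      rw [Real.exp_neg, hLdef, Real.exp_log hTp, inv_div]
    calc (1 - (α / β) * u) ^ s (t + 1) ≤ (1 - (α / β) * u) ^ smin := h1
      _ ≤ Real.exp (-(L / smin)) ^ smin := h3
      _ = p / T := by rw [h4, h5]
  -- bad event
  set bad := ⋃ t ∈ Finset.range T, {ω | X (t + 1) ω < (1 - u) * X t ω} with hbad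
  have hbadle : μ bad ≤ ENNReal.ofReal p := by
    calc μ bad ≤ ∑ t ∈ Finset.range T, μ {ω | X (t + 1) ω < (1 - u) * X t ω} :=
          measure_biUnion_finset_le _ _
      _ ≤ ∑ t ∈ Finset.range T, ENNReal.ofReal (p / T) := by
          apply Finset.sum_le_sum
          intro t ht
          rw [Finset.mem_range] at ht
          calc μ {ω | X (t + 1) ω < (1 - u) * X t ω}
              ≤ ENNReal.ofReal ((1 - (α / β) * u) ^ s (t + 1)) :=
                hstep t ht u ⟨hu0, hu1⟩
            _ ≤ ENNReal.ofReal (p / T) :=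
                ENNReal.ofReal_le_ofReal (hstepreal t ht)
      _ = (T : ℕ) • ENNReal.ofReal (p / T) := by rw [Finset.sum_const, Finset.card_range]
      _ = ENNReal.ofReal ((T:ℝ) * (p / T)) := by
          rw [nsmul_eq_mul, ← ENNReal.ofReal_natCast, ← ENNReal.ofReal_mul (by positivity)]
      _ = ENNReal.ofReal p := by
          congr 1
          field_simp
  -- good event is contained in the target
  have hsubset : badᶜ ⊆ {ω | 1 - (β / α) * ((T : ℝ) * L) / smin ≤ X T ω} := by
    intro ω hω
    simp only [hbad, Set.compl_iUnion, Set.mem_iInter, Set.mem_compl_iff,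
      Set.mem_setOf_eq, not_lt, Finset.mem_range] at hω
    have key : ∀ t, t ≤ T → (1 - u) ^ t ≤ X t ω := by
      intro t
      induction t with
      | zero => intro _; rw [hX0 ω, pow_zero]
      | succ n ih =>
        intro hn
        have hnT : n < T := hn
        have h1 : (1 - u) ^ n ≤ X n ω := ih hnT.le
        calc (1 - u) ^ (n + 1) = (1 - u) * (1 - u) ^ n := by ring
          _ ≤ (1 - u) * X n ω := by
              apply mul_le_mul_of_nonneg_left h1 (by linarith)
          _ ≤ X (n + 1) ω := hω n hnT
    have hbern : 1 - (T:ℝ) * u ≤ (1 - u) ^ T := by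
      have := one_add_mul_le_pow (a := -u) (by linarith) T
      calc 1 - (T:ℝ) * u = 1 + (T:ℝ) * (-u) := by ring
        _ ≤ (1 + -u) ^ T := this
        _ = (1 - u) ^ T := by ring_nf
    have : 1 - (β / α) * ((T : ℝ) * L) / smin = 1 - (T:ℝ) * u := by rw [hTu]
    rw [Set.mem_setOf_eq, this]
    exact le_trans hbern (key T le_rfl)
  have hcompl : ENNReal.ofReal (1 - p) ≤ μ badᶜ := by
    have huniv : (1:ENNReal) ≤ μ badᶜ + μ bad := by
      have h0 : μ (badᶜ ∪ bad) = 1 := by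
        rw [Set.compl_union_self]; exact measure_univ
      rw [← h0]
      exact measure_union_le _ _
    have h2 : (1:ENNReal) ≤ μ badᶜ + ENNReal.ofReal p :=
      le_trans huniv (add_le_add_right hbadle _)
    have h3 : ENNReal.ofReal (1 - p) + ENNReal.ofReal p = 1 := by
      rw [← ENNReal.ofReal_add (by linarith) hp0.le]
      norm_num
    apply ENNReal.le_of_add_le_add_right ENNReal.ofReal_ne_top
    rw [h3]
    exact h2
  exact le_trans hcompl (measure_mono hsubset)
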